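/- Let T ∈ ℝ, let a, b, σ be positive real constants, let γ ≥ 0 and ψ ≥ 0, and set k(x) := √(a² + 2(1+b·x)·σ²). Then the function t ↦ Φ(t,T;ψ,γ) on (−∞,T] is strictly decreasing if ψ < (k(γ)−a)/σ², identically equal to ψ if ψ = (k(γ)−a)/σ², and strictly increasing if ψ > (k(γ)−a)/σ². -/
import Mathlib


/-- k(x) := √(a² + 2(1+b·x)·σ²). -/
noncomputable def kfun (a b σ x : ℝ) : ℝ := Real.sqrt (a ^ 2 + 2 * (1 + b * x) * σ ^ 2)

/-- The explicit solution Φ(t,T;ψ,γ) of the Riccati equation with constant coefficient γ. -/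
noncomputable def Phi (a b σ ψ γ T t : ℝ) : ℝ :=
  ((kfun a b σ γ - a) / σ ^ 2 * (ψ + (a + kfun a b σ γ) / σ ^ 2) +
      (a + kfun a b σ γ) / σ ^ 2 * (ψ + (a - kfun a b σ γ) / σ ^ 2) *
        Real.exp (-(kfun a b σ γ) * (T - t))) /
    ((ψ + (a + kfun a b σ γ) / σ ^ 2) +
      ((kfun a b σ γ - a) / σ ^ 2 - ψ) * Real.exp (-(kfun a b σ γ) * (T - t)))

lemma frac_den_pos (α β ψ E : ℝ) (hα : 0 < α) (hβ : 0 < β) (hψ : 0 ≤ ψ)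
    (hE0 : 0 < E) (hE1 : E ≤ 1) : 0 < (ψ + β) - (ψ - α) * E := by
  nlinarith [mul_nonneg hψ (by linarith : (0:ℝ) ≤ 1 - E), mul_pos hα hE0]

lemma frac_mono (α β ψ E1 E2 : ℝ) (hα : 0 < α) (hβ : 0 < β) (hψ : 0 ≤ ψ)
    (hE1 : 0 < E1) (h12 : E1 < E2) (hE2 : E2 ≤ 1) (hs : α < ψ) :
    (α * (ψ + β) + β * (ψ - α) * E1) / ((ψ + β) - (ψ - α) * E1) <
      (α * (ψ + β) + β * (ψ - α) * E2) / ((ψ + β) - (ψ - α) * E2) := by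
  have hD1 := frac_den_pos α β ψ E1 hα hβ hψ hE1 (by linarith)
  have hD2 := frac_den_pos α β ψ E2 hα hβ hψ (by linarith) hE2
  rw [div_lt_div_iff₀ hD1 hD2]
  nlinarith [mul_pos (mul_pos (mul_pos (by linarith : (0:ℝ) < α + β)
    (by linarith : (0:ℝ) < ψ + β)) (by linarith : (0:ℝ) < ψ - α))
    (by linarith : (0:ℝ) < E2 - E1)]

lemma frac_anti (α β ψ E1 E2 : ℝ) (hα : 0 < α) (hβ : 0 < β) (hψ : 0 ≤ ψ)
    (hE1 : 0 < E1) (h12 : E1 < E2) (hE2 : E2 ≤ 1) (hs : ψ < α) :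
    (α * (ψ + β) + β * (ψ - α) * E2) / ((ψ + β) - (ψ - α) * E2) <
      (α * (ψ + β) + β * (ψ - α) * E1) / ((ψ + β) - (ψ - α) * E1) := by
  have hD1 := frac_den_pos α β ψ E1 hα hβ hψ hE1 (by linarith)
  have hD2 := frac_den_pos α β ψ E2 hα hβ hψ (by linarith) hE2
  rw [div_lt_div_iff₀ hD2 hD1]
  nlinarith [mul_pos (mul_pos (mul_pos (by linarith : (0:ℝ) < α + β)
    (by linarith : (0:ℝ) < ψ + β)) (by linarith : (0:ℝ) < α - ψ))
    (by linarith : (0:ℝ) < E2 - E1)]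

/-- on (−∞,T], t ↦ Φ(t,T;ψ,γ) is strictly decreasing if
ψ < (k(γ)−a)/σ², identically ψ if ψ = (k(γ)−a)/σ², and strictly increasing
if ψ > (k(γ)−a)/σ². -/
theorem Phi_monotonicity
    (T a b σ γ ψ : ℝ) (ha : 0 < a) (hb : 0 < b) (hσ : 0 < σ)
    (hγ : 0 ≤ γ) (hψ : 0 ≤ ψ) :
    (ψ < (kfun a b σ γ - a) / σ ^ 2 →
      StrictAntiOn (fun t => Phi a b σ ψ γ T t) (Set.Iic T)) ∧
    (ψ = (kfun a b σ γ - a) / σ ^ 2 →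
      ∀ t ≤ T, Phi a b σ ψ γ T t = ψ) ∧
    ((kfun a b σ γ - a) / σ ^ 2 < ψ →
      StrictMonoOn (fun t => Phi a b σ ψ γ T t) (Set.Iic T)) := by
  have hσ2 : (0:ℝ) < σ ^ 2 := by positivity
  have hka : a < kfun a b σ γ := by
    have h1 : a ^ 2 < a ^ 2 + 2 * (1 + b * γ) * σ ^ 2 := by
      nlinarith [mul_nonneg hb.le hγ]
    have h2 := Real.sqrt_lt_sqrt (sq_nonneg a) h1
    rwa [Real.sqrt_sq ha.le] at h2
  set k := kfun a b σ γ with hk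
  have hα : 0 < (k - a) / σ ^ 2 := div_pos (by linarith) hσ2
  have hβ : 0 < (a + k) / σ ^ 2 := div_pos (by linarith) hσ2
  set α := (k - a) / σ ^ 2 with hαdef
  set β := (a + k) / σ ^ 2 with hβdef
  have hk0 : 0 < k := by linarith
  have hrw : ∀ t, Phi a b σ ψ γ T t =
      (α * (ψ + β) + β * (ψ - α) * Real.exp (-k * (T - t))) /
        ((ψ + β) - (ψ - α) * Real.exp (-k * (T - t))) := by
    intro t
    unfold Phi
    rw [← hk, hαdef, hβdef]
    ring_nf
  have hexp : ∀ s t : ℝ, s < t → Real.exp (-k * (T - s)) < Real.exp (-k * (T - t)) := by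
    intro s t hst
    exact Real.exp_lt_exp.2 (by nlinarith)
  have hexple : ∀ t : ℝ, t ≤ T → Real.exp (-k * (T - t)) ≤ 1 := by
    intro t ht
    rw [show (1:ℝ) = Real.exp 0 by simp]
    exact Real.exp_le_exp.2 (by nlinarith)
  refine ⟨?_, ?_, ?_⟩
  · intro hlt s hs t ht hst
    simp only [hrw]
    exact frac_anti α β ψ _ _ hα hβ hψ (Real.exp_pos _) (hexp s t hst)
      (hexple t ht) hlt
  · intro heq t ht
    rw [hrw t, heq]
    have hne : α + β ≠ 0 := ne_of_gt (by linarith)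
    rw [sub_self, mul_zero, zero_mul, add_zero, sub_zero,
      mul_div_assoc, div_self hne, mul_one]
  · intro hlt s hs t ht hst
    simp only [hrw]
    exact frac_mono α β ψ _ _ hα hβ hψ (Real.exp_pos _) (hexp s t hst)
      (hexple t ht) hlt
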